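/- Let d ≥ 1 be an integer and let u : ℝ^d × (0,∞) → ℝ^d be measurable. Assume: (i) there is M > 0 with |u(x,t)| ≤ M·min((1+‖x‖)^{−d}, (1+t)^{−d/2}) for all t > 0 and a.e. x; (ii) there are c₀ > 0 and M₀ > 0 such that for all t > M₀ and a.e. x with ‖x‖ ≥ M₀·√t one has |u(x,t)| ≥ c₀·‖x‖^{−d}. Then for every α ≥ 0 and every p with 1 < p < ∞ and α + d/p < d, there exist constants c, c' > 0 and t₀ > 0 such that for all t > t₀, c·t^{−(1/2)(d−α−d/p)} ≤ ‖(1+‖x‖)^α·u(·,t)‖_{L^p(ℝ^d)} ≤ c'·t^{−(1/2)(d−α−d/p)}. -/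

import Mathlib

open MeasureTheory
open scoped ENNReal
open Metric

lemma scale_lintegral (d : ℕ) {s : ℝ} (β : ℝ) (hs : 0 < s) :
    ∫⁻ x : EuclideanSpace ℝ (Fin d), ENNReal.ofReal ((s + ‖x‖) ^ β) =
      ENNReal.ofReal (s ^ (β + d)) *
        ∫⁻ x : EuclideanSpace ℝ (Fin d), ENNReal.ofReal ((1 + ‖x‖) ^ β) := by
  have hmeas : Measurable fun x : EuclideanSpace ℝ (Fin d) =>
      ENNReal.ofReal ((s + ‖x‖) ^ β) :=
    ENNReal.measurable_ofReal.comp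
      (((continuous_const.add continuous_norm).rpow_const
        (fun x => Or.inl (add_pos_of_pos_of_nonneg hs (norm_nonneg x)).ne')).measurable)
  have hmap : ∫⁻ y : EuclideanSpace ℝ (Fin d), ENNReal.ofReal ((s + ‖s • y‖) ^ β)
      = ENNReal.ofReal |((s ^ d : ℝ))⁻¹| * ∫⁻ x : EuclideanSpace ℝ (Fin d),
          ENNReal.ofReal ((s + ‖x‖) ^ β) := by
    rw [← lintegral_map hmeas (measurable_const_smul s),
      Measure.map_addHaar_smul volume hs.ne', lintegral_smul_measure, smul_eq_mul,
      finrank_euclideanSpace_fin]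
  have hpt : ∀ y : EuclideanSpace ℝ (Fin d),
      ENNReal.ofReal ((s + ‖s • y‖) ^ β)
        = ENNReal.ofReal (s ^ β) * ENNReal.ofReal ((1 + ‖y‖) ^ β) := by
    intro y
    rw [norm_smul, Real.norm_eq_abs, abs_of_pos hs,
      show s + s * ‖y‖ = s * (1 + ‖y‖) by ring,
      Real.mul_rpow hs.le (by positivity), ENNReal.ofReal_mul (by positivity)]
  simp only [hpt] at hmap
  rw [lintegral_const_mul' _ _ ENNReal.ofReal_ne_top] at hmap
  have hsd : (0:ℝ) < s ^ d := by positivity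
  have : ENNReal.ofReal (s ^ d) * (ENNReal.ofReal (s ^ β) *
      ∫⁻ x : EuclideanSpace ℝ (Fin d), ENNReal.ofReal ((1 + ‖x‖) ^ β))
      = ENNReal.ofReal (s ^ d) * (ENNReal.ofReal |((s ^ d : ℝ))⁻¹| *
      ∫⁻ x : EuclideanSpace ℝ (Fin d), ENNReal.ofReal ((s + ‖x‖) ^ β)) := by
    rw [hmap]
  rw [abs_of_pos (inv_pos.mpr hsd), ← mul_assoc, ← mul_assoc,
    ← ENNReal.ofReal_mul hsd.le, ← ENNReal.ofReal_mul hsd.le,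
    mul_inv_cancel₀ hsd.ne', ENNReal.ofReal_one, one_mul] at this
  rw [← this]
  congr 2
  rw [Real.rpow_add hs, Real.rpow_natCast, mul_comm]

lemma ptwise_upper (d : ℕ) {α t r : ℝ} (hα : 0 ≤ α) (hαd : α ≤ d) (ht : 1 ≤ t)
    (hr : 0 ≤ r) :
    (1 + r) ^ α * min ((1 + r) ^ (-(d : ℝ))) ((1 + t) ^ (-(d : ℝ) / 2)) ≤
      2 ^ (d : ℝ) * (Real.sqrt t + r) ^ (α - d) := by
  have hdnn : (0:ℝ) ≤ (d:ℝ) := Nat.cast_nonneg d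
  set s := Real.sqrt t with hsdef
  have hs1 : (1:ℝ) ≤ s := by
    rw [hsdef, show (1:ℝ) = Real.sqrt 1 by simp]
    exact Real.sqrt_le_sqrt ht
  have hs0 : (0:ℝ) < s := lt_of_lt_of_le one_pos hs1
  have hts : s ^ 2 = t := Real.sq_sqrt (le_trans zero_le_one ht)
  have hsr0 : (0:ℝ) < s + r := by linarith
  have hexp : α - (d:ℝ) ≤ 0 := by linarith
  rcases le_total r s with h | h
  · have h1 : min ((1 + r) ^ (-(d : ℝ))) ((1 + t) ^ (-(d : ℝ) / 2)) ≤ s ^ (-(d:ℝ)) := by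
      refine le_trans (min_le_right _ _) ?_
      have h2 : s ^ (2:ℕ) ≤ 1 + t := by nlinarith
      have h3 := Real.rpow_le_rpow_of_nonpos (x := s ^ (2:ℕ)) (by positivity) h2
        (z := -(d:ℝ)/2) (by linarith)
      calc (1 + t) ^ (-(d : ℝ) / 2) ≤ (s ^ (2:ℕ)) ^ (-(d:ℝ)/2) := h3
        _ = s ^ (-(d:ℝ)) := by
            rw [← Real.rpow_natCast s 2, ← Real.rpow_mul hs0.le,
              show ((2:ℕ):ℝ) * (-(d:ℝ)/2) = -(d:ℝ) by push_cast; ring]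
    have h4 : (1 + r) ^ α ≤ (2*s) ^ α :=
      Real.rpow_le_rpow (by linarith) (by linarith) hα
    have h5 : (2*s) ^ α * s ^ (-(d:ℝ)) = 2 ^ α * s ^ (α - d) := by
      rw [Real.mul_rpow (by norm_num) hs0.le, mul_assoc, ← Real.rpow_add hs0,
        show α + -(d:ℝ) = α - d by ring]
    have h6 : (2*s : ℝ)^(α-(d:ℝ)) ≤ (s+r)^(α-(d:ℝ)) :=
      Real.rpow_le_rpow_of_nonpos hsr0 (by linarith) hexp
    have h7 : (2*s : ℝ)^(α-(d:ℝ)) = 2^(α-(d:ℝ)) * s^(α-(d:ℝ)) :=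
      Real.mul_rpow (by norm_num) hs0.le
    have h8 : (2:ℝ)^(d:ℝ) * (2:ℝ)^(α-(d:ℝ)) = 2^α := by
      rw [← Real.rpow_add two_pos, show (d:ℝ) + (α - d) = α by ring]
    calc (1 + r) ^ α * min ((1 + r) ^ (-(d : ℝ))) ((1 + t) ^ (-(d : ℝ) / 2))
        ≤ (1 + r) ^ α * s ^ (-(d:ℝ)) :=
          mul_le_mul_of_nonneg_left h1 (by positivity)
      _ ≤ (2*s) ^ α * s ^ (-(d:ℝ)) :=
          mul_le_mul_of_nonneg_right h4 (by positivity)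
      _ = 2 ^ α * s ^ (α - d) := h5
      _ = 2 ^ (d:ℝ) * ((2*s : ℝ)^(α-(d:ℝ))) := by rw [h7, ← mul_assoc, h8]
      _ ≤ 2 ^ (d:ℝ) * (s+r)^(α-(d:ℝ)) :=
          mul_le_mul_of_nonneg_left h6 (by positivity)
  · have hr1 : (0:ℝ) < 1 + r := by linarith
    have h1 : (1 + r) ^ α * min ((1 + r) ^ (-(d : ℝ))) ((1 + t) ^ (-(d : ℝ) / 2))
        ≤ (1 + r) ^ (α - d) := by
      calc (1 + r) ^ α * min ((1 + r) ^ (-(d : ℝ))) ((1 + t) ^ (-(d : ℝ) / 2))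
          ≤ (1 + r) ^ α * (1 + r) ^ (-(d:ℝ)) :=
            mul_le_mul_of_nonneg_left (min_le_left _ _) (by positivity)
        _ = (1 + r) ^ (α - d) := by
            rw [← Real.rpow_add hr1, show α + -(d:ℝ) = α - d by ring]
    have h6 : (2*(1+r) : ℝ)^(α-(d:ℝ)) ≤ (s+r)^(α-(d:ℝ)) :=
      Real.rpow_le_rpow_of_nonpos hsr0 (by linarith) hexp
    have h7 : (2*(1+r) : ℝ)^(α-(d:ℝ)) = 2^(α-(d:ℝ)) * (1+r)^(α-(d:ℝ)) :=
      Real.mul_rpow (by norm_num) hr1.le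
    have h8 : (2:ℝ)^(d:ℝ) * (2:ℝ)^(α-(d:ℝ)) = 2^α := by
      rw [← Real.rpow_add two_pos, show (d:ℝ) + (α - d) = α by ring]
    have h9 : (1:ℝ) ≤ 2^α := by
      have := Real.rpow_le_rpow_of_exponent_le (x := (2:ℝ)) (by norm_num) hα
      simpa using this
    calc (1 + r) ^ α * min ((1 + r) ^ (-(d : ℝ))) ((1 + t) ^ (-(d : ℝ) / 2))
        ≤ (1 + r) ^ (α - d) := h1
      _ ≤ 2^α * (1 + r) ^ (α - d) := by
          nlinarith [Real.rpow_nonneg hr1.le (α - (d:ℝ))]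
      _ = 2 ^ (d:ℝ) * ((2*(1+r) : ℝ)^(α-(d:ℝ))) := by rw [h7, ← mul_assoc, h8]
      _ ≤ 2 ^ (d:ℝ) * (s+r)^(α-(d:ℝ)) :=
          mul_le_mul_of_nonneg_left h6 (by positivity)


/-- Suppose (i) `|u(x,t)| ≤ M min((1+‖x‖)^{−d}, (1+t)^{−d/2})` for
all `t > 0` and a.e. `x`, and (ii) `|u(x,t)| ≥ c₀ ‖x‖^{−d}` for all `t > M₀` and
a.e. `x` with `‖x‖ ≥ M₀ √t`. Then for every `α ≥ 0` and `1 < p < ∞` with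
`α + d/p < d`, there are `c, c' > 0` and `t₀ > 0` with
`c t^{−(1/2)(d−α−d/p)} ≤ ‖(1+‖x‖)^α u(·,t)‖_{L^p} ≤ c' t^{−(1/2)(d−α−d/p)}`
for all `t > t₀`. -/
theorem stmt18 (d : ℕ) (hd : 1 ≤ d)
    (u : EuclideanSpace ℝ (Fin d) → ℝ → EuclideanSpace ℝ (Fin d))
    (humeas : Measurable (Function.uncurry u))
    (M : ℝ) (hM : 0 < M)
    (hupper : ∀ t : ℝ, 0 < t → ∀ᵐ x : EuclideanSpace ℝ (Fin d) ∂volume,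
      ‖u x t‖ ≤ M * min ((1 + ‖x‖) ^ (-(d : ℝ))) ((1 + t) ^ (-(d : ℝ) / 2)))
    (c₀ M₀ : ℝ) (hc₀ : 0 < c₀) (hM₀ : 0 < M₀)
    (hlower : ∀ t : ℝ, M₀ < t → ∀ᵐ x : EuclideanSpace ℝ (Fin d) ∂volume,
      M₀ * Real.sqrt t ≤ ‖x‖ → c₀ * ‖x‖ ^ (-(d : ℝ)) ≤ ‖u x t‖) :
    ∀ α : ℝ, 0 ≤ α → ∀ p : ℝ, 1 < p → α + d / p < d →
      ∃ c > (0 : ℝ), ∃ c' > (0 : ℝ), ∃ t₀ > (0 : ℝ), ∀ t : ℝ, t₀ < t →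
        ENNReal.ofReal (c * t ^ (-(1 / 2 : ℝ) * ((d : ℝ) - α - d / p))) ≤
          eLpNorm (fun x => (1 + ‖x‖) ^ α • u x t) (ENNReal.ofReal p) volume ∧
        eLpNorm (fun x => (1 + ‖x‖) ^ α • u x t) (ENNReal.ofReal p) volume ≤
          ENNReal.ofReal (c' * t ^ (-(1 / 2 : ℝ) * ((d : ℝ) - α - d / p))) := by
  intro α hα p hp hdp
  haveI : Nonempty (Fin d) := ⟨⟨0, hd⟩⟩
  haveI : Nontrivial (EuclideanSpace ℝ (Fin d)) := inferInstance
  have hp0 : (0:ℝ) < p := lt_trans one_pos hp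
  have hd0 : (0:ℝ) < (d:ℝ) := by exact_mod_cast hd
  have hdp0 : (0:ℝ) < (d:ℝ)/p := by positivity
  have hαd : α < d := by linarith
  set β : ℝ := (α - d) * p with hβdef
  have hβd : (d:ℝ) < -β := by
    have h1 : (d:ℝ)/p < (d:ℝ) - α := by linarith
    rw [div_lt_iff₀ hp0] at h1
    have h2 : -β = ((d:ℝ) - α) * p := by rw [hβdef]; ring
    linarith
  set J : ℝ≥0∞ := ∫⁻ x : EuclideanSpace ℝ (Fin d), ENNReal.ofReal ((1 + ‖x‖) ^ β)
    with hJdef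
  have hJfin : J < ⊤ := by
    have h := finite_integral_one_add_norm
      (E := EuclideanSpace ℝ (Fin d)) (μ := volume) (r := -β)
      (by rw [finrank_euclideanSpace_fin]; exact hβd)
    simpa [hJdef, neg_neg] using h
  set v := volume (Metric.ball (0 : EuclideanSpace ℝ (Fin d)) 1) with hvdef
  have hv0 : 0 < v := measure_ball_pos _ _ one_pos
  have hvfin : v ≠ ⊤ := measure_ball_lt_top.ne
  have hv0' : 0 < v.toReal := ENNReal.toReal_pos hv0.ne' hvfin
  set K : ℝ := 2 ^ (d:ℝ) * M with hKdef
  have hK0 : 0 < K := by positivity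
  have h2d1 : (0:ℝ) < (2:ℝ) ^ d - 1 := by
    have : (1:ℝ) < 2 ^ d := one_lt_pow₀ (by norm_num) (by omega)
    linarith
  set a : ℝ := c₀ ^ p * (2*M₀) ^ β * ((2:ℝ) ^ d - 1) * M₀ ^ d * v.toReal with hadef
  have ha0 : 0 < a := by
    have h1 : (0:ℝ) < (2*M₀) ^ β := Real.rpow_pos_of_pos (by positivity) β
    have h2 : (0:ℝ) < c₀ ^ p := Real.rpow_pos_of_pos hc₀ p
    rw [hadef]
    exact mul_pos (mul_pos (mul_pos (mul_pos h2 h1) h2d1) (by positivity)) hv0'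
  set b : ℝ := K ^ p * (J.toReal + 1) with hbdef
  have hb0 : 0 < b := by
    have h1 : (0:ℝ) < K ^ p := Real.rpow_pos_of_pos hK0 p
    have h2 : (0:ℝ) ≤ J.toReal := ENNReal.toReal_nonneg
    rw [hbdef]; nlinarith
  refine ⟨a ^ (1/p), Real.rpow_pos_of_pos ha0 _, b ^ (1/p), Real.rpow_pos_of_pos hb0 _,
    max M₀ 1, lt_of_lt_of_le one_pos (le_max_right _ _), ?_⟩
  intro t ht
  have ht1 : (1:ℝ) < t := lt_of_le_of_lt (le_max_right _ _) ht
  have htM : M₀ < t := lt_of_le_of_lt (le_max_left _ _) ht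
  have ht0 : (0:ℝ) < t := lt_trans one_pos ht1
  set s := Real.sqrt t with hsdef
  have hs1 : (1:ℝ) ≤ s := by
    rw [hsdef, show (1:ℝ) = Real.sqrt 1 by simp]
    exact Real.sqrt_le_sqrt ht1.le
  have hs0 : (0:ℝ) < s := lt_of_lt_of_le one_pos hs1
  have hpne : (ENNReal.ofReal p) ≠ 0 := (ENNReal.ofReal_pos.mpr hp0).ne'
  have hnorm : ∀ x : EuclideanSpace ℝ (Fin d),
      ‖(1 + ‖x‖) ^ α • u x t‖ = (1 + ‖x‖) ^ α * ‖u x t‖ := fun x => by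
    rw [norm_smul, Real.norm_eq_abs,
      abs_of_nonneg (Real.rpow_nonneg (by positivity) α)]
  -- rewrite eLpNorm
  simp only [eLpNorm_eq_lintegral_rpow_enorm_toReal hpne ENNReal.ofReal_ne_top, enorm_eq_nnnorm,
    ENNReal.toReal_ofReal hp0.le]
  set I : ℝ≥0∞ := ∫⁻ x, (‖(1 + ‖x‖) ^ α • u x t‖₊ : ℝ≥0∞) ^ p ∂volume with hIdef
  -- shared exponent identity
  have hsid : ∀ C : ℝ, 0 ≤ C → (C * s ^ (β + d)) ^ (1/p)
      = C ^ (1/p) * t ^ (-(1/2:ℝ) * ((d:ℝ) - α - d/p)) := by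
    intro C hC
    rw [Real.mul_rpow hC (by positivity), ← Real.rpow_mul hs0.le, hsdef,
      Real.sqrt_eq_rpow, ← Real.rpow_mul ht0.le]
    congr 2
    rw [hβdef]
    field_simp
    ring
  constructor
  · -- LOWER BOUND
    have hM₀s : (0:ℝ) < M₀ * s := by positivity
    set A := Metric.closedBall (0:EuclideanSpace ℝ (Fin d)) (2*(M₀*s)) \
      Metric.ball (0:EuclideanSpace ℝ (Fin d)) (M₀*s) with hAdef
    have hsub : Metric.ball (0:EuclideanSpace ℝ (Fin d)) (M₀*s) ⊆
        Metric.closedBall (0:EuclideanSpace ℝ (Fin d)) (2*(M₀*s)) :=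
      Metric.ball_subset_closedBall.trans
        (Metric.closedBall_subset_closedBall (by linarith))
    have hball : volume (Metric.ball (0:EuclideanSpace ℝ (Fin d)) (M₀*s))
        = ENNReal.ofReal ((M₀*s)^d) * v := by
      rw [Measure.addHaar_ball volume _ hM₀s.le, finrank_euclideanSpace_fin]
    have hcball : volume (Metric.closedBall (0:EuclideanSpace ℝ (Fin d)) (2*(M₀*s)))
        = ENNReal.ofReal ((2*(M₀*s))^d) * v := by
      rw [Measure.addHaar_closedBall volume _ (by positivity), finrank_euclideanSpace_fin]
    have hvolA : ENNReal.ofReal (((2:ℝ)^d - 1) * (M₀*s)^d) * v ≤ volume A := by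
      have h3 : volume A = volume (Metric.closedBall (0:EuclideanSpace ℝ (Fin d)) (2*(M₀*s)))
          - volume (Metric.ball (0:EuclideanSpace ℝ (Fin d)) (M₀*s)) :=
        measure_diff hsub measurableSet_ball.nullMeasurableSet
          (by rw [hball]; exact ENNReal.mul_ne_top ENNReal.ofReal_ne_top hvfin)
      rw [h3, hball, hcball]
      apply ENNReal.le_sub_of_add_le_right
        (ENNReal.mul_ne_top ENNReal.ofReal_ne_top hvfin)
      rw [← add_mul, ← ENNReal.ofReal_add (by positivity) (by positivity)]
      apply le_of_eq
      congr 2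
      rw [mul_pow]
      ring
    set m := c₀ * (2*(M₀*s)) ^ (α - (d:ℝ)) with hmdef
    have hm0 : 0 < m := mul_pos hc₀ (Real.rpow_pos_of_pos (by positivity) _)
    have hlowI : ENNReal.ofReal (m ^ p) * volume A ≤ I := by
      calc ENNReal.ofReal (m ^ p) * volume A
          = ∫⁻ _ in A, ENNReal.ofReal (m^p) ∂volume := (setLIntegral_const _ _).symm
        _ ≤ ∫⁻ x in A, (‖(1 + ‖x‖) ^ α • u x t‖₊ : ℝ≥0∞) ^ p ∂volume := by
            apply lintegral_mono_ae
            rw [ae_restrict_iff' (measurableSet_closedBall.diff measurableSet_ball)]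
            filter_upwards [hlower t htM] with x hx hxA
            have hx1 : M₀ * s ≤ ‖x‖ := by
              have h := hxA.2
              simpa [Metric.mem_ball, dist_zero_right, not_lt] using h
            have hx2 : ‖x‖ ≤ 2*(M₀*s) := by
              simpa [Metric.mem_closedBall, dist_zero_right] using hxA.1
            have hxpos : (0:ℝ) < ‖x‖ := lt_of_lt_of_le hM₀s hx1
            have hu := hx hx1
            have hb : m ≤ ‖(1 + ‖x‖) ^ α • u x t‖ := by
              rw [hnorm x]
              have e1 : ‖x‖ ^ α ≤ (1 + ‖x‖) ^ α :=
                Real.rpow_le_rpow (norm_nonneg x) (by linarith) hα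
              have e2 : ‖x‖ ^ α * (c₀ * ‖x‖ ^ (-(d:ℝ))) = c₀ * ‖x‖ ^ (α - (d:ℝ)) := by
                rw [show ‖x‖ ^ α * (c₀ * ‖x‖ ^ (-(d:ℝ)))
                    = c₀ * (‖x‖ ^ α * ‖x‖ ^ (-(d:ℝ))) by ring,
                  ← Real.rpow_add hxpos, show α + -(d:ℝ) = α - d by ring]
              have e3 : (2*(M₀*s)) ^ (α - (d:ℝ)) ≤ ‖x‖ ^ (α - (d:ℝ)) :=
                Real.rpow_le_rpow_of_nonpos hxpos hx2 (by linarith)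
              calc m = c₀ * (2*(M₀*s)) ^ (α - (d:ℝ)) := hmdef
                _ ≤ c₀ * ‖x‖ ^ (α - (d:ℝ)) := mul_le_mul_of_nonneg_left e3 hc₀.le
                _ = ‖x‖ ^ α * (c₀ * ‖x‖ ^ (-(d:ℝ))) := e2.symm
                _ ≤ (1 + ‖x‖) ^ α * ‖u x t‖ := by
                    apply mul_le_mul e1 hu (by positivity)
                    positivity
            calc ENNReal.ofReal (m ^ p) = ENNReal.ofReal m ^ p :=
                  (ENNReal.ofReal_rpow_of_nonneg hm0.le hp0.le).symm
              _ ≤ ENNReal.ofReal ‖(1 + ‖x‖) ^ α • u x t‖ ^ p :=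
                  ENNReal.rpow_le_rpow (ENNReal.ofReal_le_ofReal hb) hp0.le
              _ = (‖(1 + ‖x‖) ^ α • u x t‖₊ : ℝ≥0∞) ^ p := by
                  rw [ofReal_norm_eq_enorm, enorm_eq_nnnorm]
        _ ≤ I := setLIntegral_le_lintegral _ _
    have hreal : a * s ^ (β + (d:ℝ))
        = m^p * (((2:ℝ)^d - 1) * (M₀*s)^d) * v.toReal := by
      have hX : ((2*(M₀*s)) ^ (α - (d:ℝ))) ^ p = (2*M₀)^β * s^β := by
        rw [← Real.rpow_mul (by positivity), ← hβdef,
          show 2*(M₀*s) = (2*M₀)*s by ring,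
          Real.mul_rpow (by positivity) hs0.le]
      have hmp : m ^ p = c₀^p * ((2*M₀)^β * s^β) := by
        rw [hmdef, Real.mul_rpow hc₀.le (Real.rpow_nonneg (by positivity) _), hX]
      have hsplit : s ^ (β + (d:ℝ)) = s ^ β * s ^ (d:ℕ) := by
        rw [Real.rpow_add hs0, Real.rpow_natCast]
      rw [hadef, hsplit, hmp, mul_pow]
      ring
    have hkey : ENNReal.ofReal (a * s ^ (β + (d:ℝ))) ≤ I := by
      calc ENNReal.ofReal (a * s ^ (β + (d:ℝ)))
          = ENNReal.ofReal (m^p) *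
            (ENNReal.ofReal (((2:ℝ)^d - 1) * (M₀*s)^d) * v) := by
            rw [hreal, ENNReal.ofReal_mul
                (mul_nonneg (Real.rpow_nonneg hm0.le p)
                  (mul_nonneg h2d1.le (by positivity))),
              ENNReal.ofReal_mul (Real.rpow_nonneg hm0.le p),
              ENNReal.ofReal_toReal hvfin, mul_assoc]
        _ ≤ ENNReal.ofReal (m^p) * volume A := by
            exact mul_le_mul_right hvolA _
        _ ≤ I := hlowI
    calc ENNReal.ofReal (a ^ (1/p) * t ^ (-(1/2:ℝ) * ((d:ℝ) - α - d/p)))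
        = ENNReal.ofReal ((a * s ^ (β + (d:ℝ))) ^ (1/p)) := by rw [hsid a ha0.le]
      _ = ENNReal.ofReal (a * s ^ (β + (d:ℝ))) ^ (1/p) :=
          (ENNReal.ofReal_rpow_of_nonneg
            (mul_nonneg ha0.le (Real.rpow_nonneg hs0.le _)) (by positivity)).symm
      _ ≤ I ^ (1/p) := ENNReal.rpow_le_rpow hkey (by positivity)
  · -- UPPER BOUND
    have hupI : I ≤ ENNReal.ofReal (K^p) * (ENNReal.ofReal (s^(β+(d:ℝ))) * J) := by
      calc I ≤ ∫⁻ x, ENNReal.ofReal (K^p) * ENNReal.ofReal ((s + ‖x‖)^β) ∂volume := by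
            apply lintegral_mono_ae
            filter_upwards [hupper t ht0] with x hx
            have hb2 : ‖(1 + ‖x‖) ^ α • u x t‖ ≤ K * (s + ‖x‖) ^ (α - (d:ℝ)) := by
              rw [hnorm x]
              calc (1 + ‖x‖) ^ α * ‖u x t‖
                  ≤ (1 + ‖x‖) ^ α *
                    (M * min ((1 + ‖x‖) ^ (-(d:ℝ))) ((1 + t) ^ (-(d:ℝ)/2))) :=
                    mul_le_mul_of_nonneg_left hx (by positivity)
                _ = M * ((1 + ‖x‖) ^ α *
                    min ((1 + ‖x‖) ^ (-(d:ℝ))) ((1 + t) ^ (-(d:ℝ)/2))) := by ring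
                _ ≤ M * (2 ^ (d:ℝ) * (s + ‖x‖) ^ (α - (d:ℝ))) := by
                    apply mul_le_mul_of_nonneg_left ?_ hM.le
                    rw [hsdef]
                    exact ptwise_upper d hα hαd.le ht1.le (norm_nonneg x)
                _ = K * (s + ‖x‖) ^ (α - (d:ℝ)) := by rw [hKdef]; ring
            calc (‖(1 + ‖x‖) ^ α • u x t‖₊ : ℝ≥0∞) ^ p
                = ENNReal.ofReal ‖(1 + ‖x‖) ^ α • u x t‖ ^ p := by
                  rw [ofReal_norm_eq_enorm, enorm_eq_nnnorm]
              _ ≤ ENNReal.ofReal (K * (s + ‖x‖) ^ (α - (d:ℝ))) ^ p :=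
                  ENNReal.rpow_le_rpow (ENNReal.ofReal_le_ofReal hb2) hp0.le
              _ = ENNReal.ofReal ((K * (s + ‖x‖) ^ (α - (d:ℝ))) ^ p) :=
                  ENNReal.ofReal_rpow_of_nonneg (by positivity) hp0.le
              _ = ENNReal.ofReal (K^p) * ENNReal.ofReal ((s + ‖x‖)^β) := by
                  rw [Real.mul_rpow hK0.le (Real.rpow_nonneg (by positivity) _),
                    ← Real.rpow_mul (by positivity), ← hβdef,
                    ENNReal.ofReal_mul (Real.rpow_nonneg hK0.le p)]
        _ = ENNReal.ofReal (K^p) * ∫⁻ x, ENNReal.ofReal ((s + ‖x‖)^β) ∂volume :=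
            lintegral_const_mul' _ _ ENNReal.ofReal_ne_top
        _ = ENNReal.ofReal (K^p) * (ENNReal.ofReal (s^(β+(d:ℝ))) * J) := by
            rw [scale_lintegral d β hs0, ← hJdef]
    have hJle : J ≤ ENNReal.ofReal (J.toReal + 1) :=
      calc J = ENNReal.ofReal J.toReal := (ENNReal.ofReal_toReal hJfin.ne).symm
        _ ≤ ENNReal.ofReal (J.toReal + 1) :=
          ENNReal.ofReal_le_ofReal (by linarith [ENNReal.toReal_nonneg (a := J)])
    have hkey : I ≤ ENNReal.ofReal (b * s ^ (β + (d:ℝ))) := by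
      calc I ≤ ENNReal.ofReal (K^p) * (ENNReal.ofReal (s^(β+(d:ℝ))) * J) := hupI
        _ ≤ ENNReal.ofReal (K^p) *
            (ENNReal.ofReal (s^(β+(d:ℝ))) * ENNReal.ofReal (J.toReal + 1)) := by
            gcongr
        _ = ENNReal.ofReal (b * s^(β+(d:ℝ))) := by
            rw [hbdef, ← ENNReal.ofReal_mul (Real.rpow_nonneg hs0.le _),
              ← ENNReal.ofReal_mul (Real.rpow_nonneg hK0.le p)]
            congr 1
            ring
    calc I ^ (1/p) ≤ ENNReal.ofReal (b * s ^ (β + (d:ℝ))) ^ (1/p) :=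
          ENNReal.rpow_le_rpow hkey (by positivity)
      _ = ENNReal.ofReal ((b * s ^ (β + (d:ℝ))) ^ (1/p)) :=
          ENNReal.ofReal_rpow_of_nonneg
            (mul_nonneg hb0.le (Real.rpow_nonneg hs0.le _)) (by positivity)
      _ = ENNReal.ofReal (b ^ (1/p) * t ^ (-(1/2:ℝ) * ((d:ℝ) - α - d/p))) := by
          rw [hsid b hb0.le]
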